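/- arXiv:2411.08245 — 5 statements merged into one kernel-verified Lean document; each statement's English description precedes it below -/
import Mathlib

section
/- If Δ is a pure strongly connected d-dimensional simplicial complex whose vertex set is [n] with a unit interval order, then the lexicographic order on the facets of Δ is a shelling order. -/
open Finset

/-- A simplicial complex on vertex set `ℕ`, given as the finite family of all of its
faces, closed under taking subsets. -/
def IsComplex (Δ : Finset (Finset ℕ)) : Prop :=
  ∀ F ∈ Δ, ∀ G ⊆ F, G ∈ Δ

/-- `F` is a facet (maximal face) of `Δ`. -/
def IsFacet (Δ : Finset (Finset ℕ)) (F : Finset ℕ) : Prop :=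
  F ∈ Δ ∧ ∀ G ∈ Δ, F ⊆ G → F = G

/-- The finset of facets of `Δ`. -/
def facets (Δ : Finset (Finset ℕ)) : Finset (Finset ℕ) :=
  Δ.filter fun F => ∀ G ∈ Δ, F ⊆ G → F = G

/-- `Δ` is pure of dimension `d`: every facet has `d + 1` vertices. -/
def IsPure (d : ℕ) (Δ : Finset (Finset ℕ)) : Prop :=
  ∀ F, IsFacet Δ F → F.card = d + 1

/-- Dual graph of a pure `d`-dimensional complex: nodes are facets, two facets are
adjacent iff they share a face with `d` elements (a codimension-one face). -/
def dualGraph (d : ℕ) (Δ : Finset (Finset ℕ)) : SimpleGraph {F // F ∈ facets Δ} :=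
  SimpleGraph.fromRel fun F G => ((F : Finset ℕ) ∩ (G : Finset ℕ)).card = d

/-- `Δ` is strongly connected: its dual graph is connected. -/
def StronglyConnected (d : ℕ) (Δ : Finset (Finset ℕ)) : Prop :=
  (dualGraph d Δ).Connected

/-- The labeling of the vertices by `ℕ` is a unit interval order: whenever
`F = {v₀ < v₁ < ⋯ < v_d}` is a facet, every `(d+1)`-element subset of the integer
interval `{v₀, v₀+1, …, v_d}` is a facet. -/
def UnitIntervalOrder (d : ℕ) (Δ : Finset (Finset ℕ)) : Prop :=
  ∀ F, IsFacet Δ F → ∀ hF : F.Nonempty,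
    ∀ S ⊆ Finset.Icc (F.min' hF) (F.max' hF), S.card = d + 1 → IsFacet Δ S

/-- The increasing list of the vertices of a face. -/
def sortedList (F : Finset ℕ) : List ℕ := F.sort (· ≤ ·)

/-- Lexicographic order on faces, comparing the increasing lists of vertices. -/
def faceLexLt (F G : Finset ℕ) : Prop :=
  List.Lex (· < ·) (sortedList F) (sortedList G)

/-- `L` lists exactly the facets of `Δ`, in lexicographic order. -/
def LexFacetList (Δ : Finset (Finset ℕ)) (L : List (Finset ℕ)) : Prop :=
  L.Nodup ∧ L.toFinset = facets Δ ∧ L.Pairwise faceLexLt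

/-- `L` is a shelling order of the pure `d`-dimensional complex `Δ`: it lists the
facets of `Δ` so that for each `k`, the intersection of `⟨L[k+1]⟩` with
`⟨L[0], …, L[k]⟩` is pure of dimension `d - 1`, i.e. it is nonempty and each of
its faces is contained in a common `d`-element face of `L[k+1]` and some earlier
facet. -/
def IsShellingOrder (d : ℕ) (Δ : Finset (Finset ℕ)) (L : List (Finset ℕ)) : Prop :=
  L.Nodup ∧ L.toFinset = facets Δ ∧
  ∀ (k : ℕ) (hk : k + 1 < L.length),
    (∃ τ ⊆ L.get ⟨k + 1, hk⟩, τ.card = d ∧ ∃ G ∈ L.take (k + 1), τ ⊆ G) ∧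
    (∀ σ ⊆ L.get ⟨k + 1, hk⟩, (∃ G ∈ L.take (k + 1), σ ⊆ G) →
      ∃ τ, σ ⊆ τ ∧ τ ⊆ L.get ⟨k + 1, hk⟩ ∧ τ.card = d ∧ ∃ G ∈ L.take (k + 1), τ ⊆ G)

/-- `Δ` is shellable (as a pure `d`-dimensional complex). -/
def Shellable (d : ℕ) (Δ : Finset (Finset ℕ)) : Prop :=
  ∃ L, IsShellingOrder d Δ L

/-- The link of the vertex `v` in `Δ`. -/
def linkC (Δ : Finset (Finset ℕ)) (v : ℕ) : Finset (Finset ℕ) :=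
  Δ.filter fun E => v ∉ E ∧ insert v E ∈ Δ

/-- The deletion of the vertex `v` from `Δ`. -/
def delC (Δ : Finset (Finset ℕ)) (v : ℕ) : Finset (Finset ℕ) :=
  Δ.filter fun E => v ∉ E

/-- Vertex decomposability: `Δ` is a simplex (possibly the void/empty simplex `{∅}`),
or it has a shedding vertex `v` whose link and deletion are vertex decomposable and
such that every facet of the deletion is a facet of `Δ`. -/
inductive VertexDecomposable : Finset (Finset ℕ) → Prop
  | simplex (V : Finset ℕ) : VertexDecomposable V.powerset
  | shed (Δ : Finset (Finset ℕ)) (v : ℕ) :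
      VertexDecomposable (linkC Δ v) → VertexDecomposable (delC Δ v) →
      (∀ F, IsFacet (delC Δ v) F → IsFacet Δ F) → VertexDecomposable Δ

lemma mem_facets_iff {Δ : Finset (Finset ℕ)} {F : Finset ℕ} :
    F ∈ facets Δ ↔ IsFacet Δ F := by
  simp [facets, IsFacet, Finset.mem_filter]

lemma sortedList_cons {F : Finset ℕ} (h : F.Nonempty) :
    sortedList F = F.min' h :: sortedList (F.erase (F.min' h)) := by
  unfold sortedList
  conv_lhs => rw [← Finset.insert_erase (F.min'_mem h)]
  rw [Finset.sort_insert]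
  · intro b hb; exact F.min'_le b (Finset.mem_of_mem_erase hb)
  · exact Finset.notMem_erase _ _

lemma lex_char : ∀ (n : ℕ) (F G : Finset ℕ), F.card = n → G.card = n →
    (faceLexLt F G ↔ ∃ m, m ∈ F ∧ m ∉ G ∧ ∀ x, x < m → (x ∈ F ↔ x ∈ G)) := by
  intro n
  induction n with
  | zero =>
    intro F G hF hG
    rw [Finset.card_eq_zero] at hF hG; subst hF; subst hG
    constructor
    · intro h; simp [faceLexLt, sortedList] at h
    · rintro ⟨m, hm, -⟩; simp at hm
  | succ n ih =>
    intro F G hF hG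
    have hFne : F.Nonempty := Finset.card_pos.mp (by omega)
    have hGne : G.Nonempty := Finset.card_pos.mp (by omega)
    have haF := F.min'_mem hFne
    have hbG := G.min'_mem hGne
    set a := F.min' hFne with ha
    set b := G.min' hGne with hb
    clear_value a b
    rw [faceLexLt, sortedList_cons hFne, sortedList_cons hGne, ← ha, ← hb]
    rcases lt_trichotomy a b with hab | hab | hab
    · constructor
      · intro _
        refine ⟨a, haF, fun hmem => absurd (G.min'_le a hmem) (by omega), fun x hx => ?_⟩
        constructor
        · intro hxF; exact absurd (F.min'_le x hxF) (by omega)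
        · intro hxG; exact absurd (G.min'_le x hxG) (by omega)
      · intro _; exact List.Lex.rel hab
    · subst hab
      rw [List.lex_cons_iff]
      change faceLexLt (F.erase a) (G.erase a) ↔ _
      rw [ih (F.erase a) (G.erase a) (by rw [Finset.card_erase_of_mem haF]; omega)
        (by rw [Finset.card_erase_of_mem hbG]; omega)]
      constructor
      · rintro ⟨m, hmF, hmG, hlow⟩
        have hma : m ≠ a := fun h => by simp [h] at hmF
        refine ⟨m, Finset.mem_of_mem_erase hmF, fun h => hmG (Finset.mem_erase.mpr ⟨hma, h⟩), ?_⟩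
        intro x hx
        by_cases hxa : x = a
        · subst hxa; exact ⟨fun _ => hbG, fun _ => haF⟩
        · have := hlow x hx
          simp [Finset.mem_erase, hxa] at this
          exact this
      · rintro ⟨m, hmF, hmG, hlow⟩
        have hma : m ≠ a := fun h => hmG (h ▸ hbG)
        refine ⟨m, Finset.mem_erase.mpr ⟨hma, hmF⟩, fun h => hmG (Finset.mem_of_mem_erase h), ?_⟩
        intro x hx
        simp only [Finset.mem_erase]
        rw [hlow x hx]
    · constructor
      · intro h
        cases h with
        | rel h => omega
        | cons h => omega
      · rintro ⟨m, hmF, hmG, hlow⟩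
        have hbm : b < m := by have := F.min'_le m hmF; omega
        have hbF : b ∈ F := (hlow b hbm).mpr hbG
        have := F.min'_le b hbF
        omega

lemma lex_asymm {F G : Finset ℕ} (h : faceLexLt F G) : ¬ faceLexLt G F :=
  fun h' => (List.Lex.asymm (· < ·)).asymm _ _ h h'

lemma lex_irrefl {F : Finset ℕ} (h : faceLexLt F F) : False := lex_asymm h h

lemma build {d : ℕ} {Δ : Finset (Finset ℕ)} (hU : UnitIntervalOrder d Δ)
    {F V σ : Finset ℕ} (hV : IsFacet Δ V) (hVne : V.Nonempty)
    (hFc : F.card = d + 1) {v w : ℕ} (hv : v ∈ F) (hvσ : v ∉ σ) (hσF : σ ⊆ F)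
    (hw : w ∉ F) (hwv : w < v)
    (hsub : insert w (F.erase v) ⊆ Finset.Icc (V.min' hVne) (V.max' hVne)) :
    ∃ τ H, σ ⊆ τ ∧ τ ⊆ F ∧ τ.card = d ∧ IsFacet Δ H ∧ faceLexLt H F ∧ τ ⊆ H := by
  set H := insert w (F.erase v) with hH
  have hwe : w ∉ F.erase v := fun h => hw (Finset.mem_of_mem_erase h)
  have hHc : H.card = d + 1 := by
    rw [hH, Finset.card_insert_of_notMem hwe, Finset.card_erase_of_mem hv, hFc]; omega
  refine ⟨F.erase v, H, ?_, Finset.erase_subset _ _,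
    by rw [Finset.card_erase_of_mem hv, hFc]; omega, hU V hV hVne H hsub hHc, ?_,
    Finset.subset_insert _ _⟩
  · intro x hx
    exact Finset.mem_erase.mpr ⟨fun h => hvσ (h ▸ hx), hσF hx⟩
  · rw [lex_char (d+1) H F hHc hFc]
    refine ⟨w, Finset.mem_insert_self _ _, hw, fun x hx => ?_⟩
    simp only [hH, Finset.mem_insert, Finset.mem_erase]
    constructor
    · rintro (rfl | ⟨-, hxF⟩)
      · omega
      · exact hxF
    · intro hxF; exact Or.inr ⟨by omega, hxF⟩

lemma walk_cross {V : Type*} {G : SimpleGraph V} (P : V → Prop) :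
    ∀ {u v : V}, G.Walk u v → P u → ¬ P v → ∃ a b, G.Adj a b ∧ P a ∧ ¬ P b := by
  intro u v W
  induction W with
  | nil => intro hu hv; exact absurd hu hv
  | @cons a b c h W ih =>
    intro hu hv
    by_cases hb : P b
    · exact ih hb hv
    · exact ⟨a, b, h, hu, hb⟩

lemma key {d : ℕ} {Δ : Finset (Finset ℕ)} (hP : IsPure d Δ) (hSC : StronglyConnected d Δ)
    (hU : UnitIntervalOrder d Δ) {F G σ : Finset ℕ} (hF : IsFacet Δ F) (hG : IsFacet Δ G)
    (hlt : faceLexLt G F) (hσF : σ ⊆ F) (hσG : σ ⊆ G) :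
    ∃ τ H, σ ⊆ τ ∧ τ ⊆ F ∧ τ.card = d ∧ IsFacet Δ H ∧ faceLexLt H F ∧ τ ⊆ H := by
  have hFc : F.card = d + 1 := hP F hF
  have hGc : G.card = d + 1 := hP G hG
  have hne : G ≠ F := fun h => lex_irrefl (h ▸ hlt)
  have hFne : F.Nonempty := Finset.card_pos.mp (by omega)
  have hGne : G.Nonempty := Finset.card_pos.mp (by omega)
  have hσneF : σ ≠ F := by
    rintro rfl
    exact hne (hF.2 G hG.1 hσG).symm
  have hex : (F \ σ).Nonempty := by
    rw [Finset.sdiff_nonempty]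
    intro h
    exact hσneF (Finset.Subset.antisymm hσF h)
  -- dispatch d = 0
  rcases Nat.eq_zero_or_pos d with rfl | hd
  · have hσe : σ = ∅ := by
      rw [← Finset.subset_empty]
      intro x hx
      obtain ⟨v, hv⟩ := hex
      rw [Finset.mem_sdiff] at hv
      have hxv : x ≠ v := fun h => hv.2 (h ▸ hx)
      have := Finset.one_lt_card.mpr ⟨x, hσF hx, v, hv.1, hxv⟩
      omega
    exact ⟨∅, G, by simp [hσe], Finset.empty_subset _, rfl, hG, hlt, Finset.empty_subset _⟩
  obtain ⟨m, hmG, hmF, hlow⟩ := (lex_char (d+1) G F hGc hFc).mp hlt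
  set v0 := F.min' hFne with hv0
  set vd := F.max' hFne with hvd
  clear_value v0 vd
  have hv0F : v0 ∈ F := hv0 ▸ F.min'_mem hFne
  have hvdF : vd ∈ F := hvd ▸ F.max'_mem hFne
  have hv0le : ∀ x ∈ F, v0 ≤ x := fun x hx => hv0 ▸ F.min'_le x hx
  have hlevd : ∀ x ∈ F, x ≤ vd := fun x hx => hvd ▸ F.le_max' x hx
  have hFIcc : F ⊆ Finset.Icc v0 vd := fun x hx => Finset.mem_Icc.mpr ⟨hv0le x hx, hlevd x hx⟩
  have hGlow : ∀ x ∈ F, x < m → x ∈ G := fun x hx h => (hlow x h).mpr hx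
  rcases lt_trichotomy m v0 with hmv0 | hmv0 | hmv0
  · -- m < v0
    by_cases hMG : vd ≤ G.max' hGne
    · -- use G as certifying facet
      obtain ⟨v, hv⟩ := hex
      rw [Finset.mem_sdiff] at hv
      refine build hU hG hGne hFc hv.1 hv.2 hσF (fun h => by have := hv0le m h; omega)
        (by have := hv0le v hv.1; omega) ?_
      intro x hx
      rw [Finset.mem_insert] at hx
      rw [Finset.mem_Icc]
      rcases hx with rfl | hx
      · exact ⟨G.min'_le x hmG, G.le_max' x hmG⟩
      · have hxF := Finset.mem_of_mem_erase hx
        have h1 := G.min'_le m hmG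
        have := hv0le x hxF; have := hlevd x hxF
        constructor <;> omega
    · push_neg at hMG
      have hvdσ : vd ∉ σ := fun h => absurd (G.le_max' vd (hσG h)) (by omega)
      by_cases hgap : ∃ w ∈ Finset.Icc v0 vd, w ∉ F
      · obtain ⟨w, hwI, hwF⟩ := hgap
        rw [Finset.mem_Icc] at hwI
        have hwvd : w < vd := lt_of_le_of_ne hwI.2 (fun h => hwF (h ▸ hvdF))
        refine build hU hF hFne hFc hvdF hvdσ hσF hwF hwvd ?_
        intro x hx
        rw [Finset.mem_insert] at hx
        rw [← hv0, ← hvd]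
        rcases hx with rfl | hx
        · exact Finset.mem_Icc.mpr hwI
        · exact hFIcc (Finset.mem_of_mem_erase hx)
      · -- F is the full interval [v0, vd]
        push_neg at hgap
        have hFeq : F = Finset.Icc v0 vd := Finset.Subset.antisymm hFIcc (fun x hx => hgap x hx)
        have hvdv0 : vd = v0 + d := by
          have h1 : (Finset.Icc v0 vd).card = d + 1 := hFeq ▸ hFc
          rw [Nat.card_Icc] at h1
          have := hv0le vd hvdF
          omega
        -- find crossing edge via strong connectivity
        have hGfac : G ∈ facets Δ := mem_facets_iff.mpr hG
        have hFfac : F ∈ facets Δ := mem_facets_iff.mpr hF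
        obtain ⟨W⟩ := hSC.preconnected ⟨G, hGfac⟩ ⟨F, hFfac⟩
        obtain ⟨A', B', hadj, hPA, hPB⟩ :=
          walk_cross (fun X : {X // X ∈ facets Δ} => ∃ x ∈ (X : Finset ℕ), x < v0) W
            ⟨m, hmG, hmv0⟩ (fun ⟨x, hx, hxlt⟩ => absurd (hv0le x hx) (by omega))
        obtain ⟨A, hAfac⟩ := A'
        obtain ⟨B, hBfac⟩ := B'
        obtain ⟨a, haA, hav0⟩ := hPA
        have hA : IsFacet Δ A := mem_facets_iff.mp hAfac
        have hB : IsFacet Δ B := mem_facets_iff.mp hBfac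
        have hAc : A.card = d + 1 := hP A hA
        have hAne : A.Nonempty := Finset.card_pos.mp (by omega)
        have hBv0 : ∀ x ∈ B, v0 ≤ x := by
          intro x hx
          by_contra h
          exact hPB ⟨x, hx, by omega⟩
        have hinter : (A ∩ B).card = d := by
          have := hadj
          simp only [dualGraph, SimpleGraph.fromRel_adj] at this
          rcases this.2 with h | h
          · exact h
          · rw [Finset.inter_comm]; exact h
        have haF : a ∉ F := fun h => absurd (hv0le a h) (by omega)
        set g := A.max' hAne with hg
        have hgbig : v0 + d - 1 ≤ g := by
          have hsub' : A ∩ B ⊆ Finset.Icc v0 g := by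
            intro x hx
            rw [Finset.mem_inter] at hx
            exact Finset.mem_Icc.mpr ⟨hBv0 x hx.2, hg ▸ A.le_max' x (Finset.mem_inter.mp (Finset.mem_inter.mpr hx)).1⟩
          have := Finset.card_le_card hsub'
          rw [Nat.card_Icc] at this
          omega
        have haIcc : a ∈ Finset.Icc (A.min' hAne) g := Finset.mem_Icc.mpr ⟨A.min'_le a haA, hg ▸ A.le_max' a haA⟩
        have hminA : A.min' hAne ≤ a := A.min'_le a haA
        by_cases hgvd : vd ≤ g
        · obtain ⟨v, hv⟩ := hex
          rw [Finset.mem_sdiff] at hv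
          refine build hU hA hAne hFc hv.1 hv.2 hσF haF (by have := hv0le v hv.1; omega) ?_
          intro x hx
          rw [Finset.mem_insert] at hx
          rw [Finset.mem_Icc]
          rcases hx with rfl | hx
          · exact Finset.mem_Icc.mp haIcc
          · have hxF := Finset.mem_of_mem_erase hx
            have := hv0le x hxF; have := hlevd x hxF
            constructor <;> omega
        · push_neg at hgvd
          refine build hU hA hAne hFc hvdF hvdσ hσF haF (by omega) ?_
          intro x hx
          rw [Finset.mem_insert] at hx
          rw [Finset.mem_Icc]
          rcases hx with rfl | hx
          · exact Finset.mem_Icc.mp haIcc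
          · rw [Finset.mem_erase] at hx
            have := hv0le x hx.2; have := hlevd x hx.2
            have hxvd : x ≠ vd := hx.1
            constructor <;> omega
  · exact absurd (hmv0 ▸ hv0F) hmF
  · -- v0 < m
    have hmvd : m < vd := by
      rcases lt_trichotomy m vd with h | h | h
      · exact h
      · exact absurd (h ▸ hvdF) hmF
      · exact absurd (hF.2 G hG.1
          (fun x hx => hGlow x hx (by have := hlevd x hx; omega))).symm hne
    have hvex : ∃ v ∈ F \ σ, m < v := by
      by_contra h
      push_neg at h
      apply hne
      symm
      apply hF.2 G hG.1
      intro x hx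
      by_cases hxσ : x ∈ σ
      · exact hσG hxσ
      · have hxm := h x (Finset.mem_sdiff.mpr ⟨hx, hxσ⟩)
        have hxne : x ≠ m := fun hh => hmF (hh ▸ hx)
        exact hGlow x hx (by omega)
    obtain ⟨v, hvFσ, hmv⟩ := hvex
    rw [Finset.mem_sdiff] at hvFσ
    refine build hU hF hFne hFc hvFσ.1 hvFσ.2 hσF hmF hmv ?_
    intro x hx
    rw [Finset.mem_insert] at hx
    rw [← hv0, ← hvd]
    rcases hx with rfl | hx
    · exact Finset.mem_Icc.mpr ⟨by omega, by omega⟩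
    · exact hFIcc (Finset.mem_of_mem_erase hx)

theorem stmt0 (n d : ℕ) (Δ : Finset (Finset ℕ))
    (hC : IsComplex Δ) (hP : IsPure d Δ) (hSC : StronglyConnected d Δ)
    (hU : UnitIntervalOrder d Δ) (hV : Δ.sup id ⊆ Finset.Icc 1 n)
    (L : List (Finset ℕ)) (hL : LexFacetList Δ L) :
    IsShellingOrder d Δ L := by
  obtain ⟨hnd, hset, hsort⟩ := hL
  refine ⟨hnd, hset, ?_⟩
  intro k hk
  set F := L.get ⟨k + 1, hk⟩ with hFdef
  have hmemL : ∀ X ∈ L, IsFacet Δ X := fun X hX =>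
    mem_facets_iff.mp (hset ▸ List.mem_toFinset.mpr hX)
  have hFfac : IsFacet Δ F := hmemL F (L.get_mem _)
  have hlen : (L.take (k + 1)).length = k + 1 := by
    rw [List.length_take]; omega
  -- earlier facets are lex-smaller
  have helper1 : ∀ Gx ∈ L.take (k + 1), IsFacet Δ Gx ∧ faceLexLt Gx F := by
    intro Gx hGx
    obtain ⟨i, hi, hGxi⟩ := List.getElem_of_mem hGx
    rw [hlen] at hi
    have hiL : i < L.length := by omega
    have hGeq : Gx = L.get ⟨i, hiL⟩ := by
      rw [← hGxi, List.getElem_take]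
      rfl
    refine ⟨hmemL Gx (hGeq ▸ L.get_mem _), ?_⟩
    rw [hGeq, hFdef]
    exact hsort.rel_get_of_lt (by simp [Fin.lt_def]; omega)
  -- lex-smaller facets appear earlier
  have helper2 : ∀ H, IsFacet Δ H → faceLexLt H F → H ∈ L.take (k + 1) := by
    intro H hHfac hHlt
    have hHL : H ∈ L := List.mem_toFinset.mp (hset ▸ mem_facets_iff.mpr hHfac)
    obtain ⟨j, hj, hHj⟩ := List.getElem_of_mem hHL
    have hjk : j < k + 1 := by
      by_contra h
      push_neg at h
      rcases eq_or_lt_of_le h with h' | h'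
      · apply lex_irrefl (F := F)
        have : H = F := by
          rw [← hHj, hFdef, List.get_eq_getElem]
          congr 1
          simp
          omega
        exact this ▸ hHlt
      · have : faceLexLt F H := by
          rw [hFdef, ← hHj]
          exact hsort.rel_get_of_lt (a := ⟨k+1, hk⟩) (b := ⟨j, hj⟩) (by simp [Fin.lt_def]; omega)
        exact lex_asymm hHlt this
    have : (L.take (k+1))[j]'(by omega) = H := by rw [List.getElem_take]; exact hHj
    exact this ▸ List.getElem_mem _
  have h0 : (0 : ℕ) < L.length := by omega
  have hG0 : L.get ⟨0, h0⟩ ∈ L.take (k + 1) := by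
    have : (L.take (k+1))[0]'(by omega) = L.get ⟨0, h0⟩ := by
      rw [List.getElem_take]; rfl
    exact this ▸ List.getElem_mem _
  constructor
  · -- existence part, from key with σ = ∅
    obtain ⟨hG0fac, hG0lt⟩ := helper1 _ hG0
    obtain ⟨τ, H, -, hτF, hτc, hHfac, hHlt, hτH⟩ :=
      key hP hSC hU hFfac hG0fac hG0lt (Finset.empty_subset F) (Finset.empty_subset _)
    exact ⟨τ, hτF, hτc, H, helper2 H hHfac hHlt, hτH⟩
  · rintro σ hσF ⟨G, hGtake, hσG⟩
    obtain ⟨hGfac, hGlt⟩ := helper1 _ hGtake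
    obtain ⟨τ, H, hστ, hτF, hτc, hHfac, hHlt, hτH⟩ :=
      key hP hSC hU hFfac hGfac hGlt hσF hσG
    exact ⟨τ, hστ, hτF, hτc, H, helper2 H hHfac hHlt, hτH⟩
end

section
/- If Δ is a pure strongly connected d-dimensional simplicial complex whose vertex set is [n] with a unit interval order, then Δ is vertex decomposable. -/
open Finset

def minv (F : Finset ℕ) : ℕ := WithTop.untopD 0 F.min
def maxv (F : Finset ℕ) : ℕ := WithBot.unbotD 0 F.max

lemma minv_eq {F : Finset ℕ} (h : F.Nonempty) : minv F = F.min' h := by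
  rw [minv, ← Finset.coe_min' h, WithTop.untopD_coe]

lemma maxv_eq {F : Finset ℕ} (h : F.Nonempty) : maxv F = F.max' h := by
  rw [maxv, ← Finset.coe_max' h, WithBot.unbotD_coe]

lemma exists_facet_superset {Δ : Finset (Finset ℕ)} {E : Finset ℕ} (hE : E ∈ Δ) :
    ∃ F, IsFacet Δ F ∧ E ⊆ F := by
  classical
  obtain ⟨m, hm, hmax⟩ : ∃ m ∈ Δ.filter (fun G => E ⊆ G), ∀ x ∈ Δ.filter (fun G => E ⊆ G), ¬ m ⊂ x := by
    obtain ⟨m, hm⟩ := Finset.exists_maximal (s := Δ.filter (fun G => E ⊆ G)) ⟨E, by simp [hE]⟩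
    exact ⟨m, hm.1, fun x hx hlt => hlt.2 (hm.2 hx hlt.1)⟩
  rw [Finset.mem_filter] at hm
  refine ⟨m, ⟨hm.1, fun G hG hsub => ?_⟩, hm.2⟩
  by_contra hne
  exact hmax G (Finset.mem_filter.mpr ⟨hG, hm.2.trans hsub⟩)
    (Finset.ssubset_iff_subset_ne.mpr ⟨hsub, hne⟩)

def skelC (V : Finset ℕ) (k : ℕ) : Finset (Finset ℕ) :=
  V.powerset.filter fun E => E.card ≤ k

lemma mem_skelC {V E : Finset ℕ} {k : ℕ} : E ∈ skelC V k ↔ E ⊆ V ∧ E.card ≤ k := by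
  simp [skelC]

lemma skelC_vd : ∀ (n : ℕ) (V : Finset ℕ) (k : ℕ), V.card ≤ n → VertexDecomposable (skelC V k) := by
  intro n
  induction n with
  | zero =>
    intro V k hV
    have hVe : V = ∅ := card_eq_zero.mp (Nat.le_zero.mp hV)
    subst hVe
    have : skelC (∅ : Finset ℕ) k = (∅ : Finset ℕ).powerset := by
      ext E
      simp only [mem_skelC, mem_powerset, subset_empty]
      constructor
      · rintro ⟨h, _⟩; exact h
      · rintro rfl; simp
    rw [this]; exact VertexDecomposable.simplex ∅
  | succ n IH =>
    intro V k hV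
    match k with
    | 0 =>
      have : skelC V 0 = (∅ : Finset ℕ).powerset := by
        ext E
        simp only [mem_skelC, mem_powerset, subset_empty, Nat.le_zero, card_eq_zero]
        constructor
        · rintro ⟨_, h⟩; exact h
        · rintro rfl; simp
      rw [this]; exact VertexDecomposable.simplex ∅
    | k + 1 =>
      by_cases hcard : V.card ≤ k + 1
      · have : skelC V (k + 1) = V.powerset := by
          ext E
          simp only [mem_skelC, mem_powerset, and_iff_left_iff_imp]
          exact fun hE => (card_le_card hE).trans hcard
        rw [this]; exact VertexDecomposable.simplex V
      · obtain ⟨v, hv⟩ : V.Nonempty := card_pos.mp (by omega)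
        have herase : (V.erase v).card ≤ n := by
          rw [card_erase_of_mem hv]; omega
        have hlink : linkC (skelC V (k + 1)) v = skelC (V.erase v) k := by
          ext E
          simp only [linkC, Finset.mem_filter, mem_skelC]
          constructor
          · rintro ⟨⟨hEV, hEc⟩, hvE, _, hinsc⟩
            refine ⟨fun x hx => Finset.mem_erase.mpr ⟨fun h => hvE (h ▸ hx), hEV hx⟩, ?_⟩
            rw [Finset.card_insert_of_notMem hvE] at hinsc; omega
          · rintro ⟨hEe, hEc⟩
            have hvE : v ∉ E := fun h => (Finset.mem_erase.mp (hEe h)).1 rfl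
            have hEV : E ⊆ V := hEe.trans (erase_subset _ _)
            refine ⟨⟨hEV, by omega⟩, hvE, Finset.insert_subset hv hEV, ?_⟩
            rw [Finset.card_insert_of_notMem hvE]; omega
        have hdel : delC (skelC V (k + 1)) v = skelC (V.erase v) (k + 1) := by
          ext E
          simp only [delC, Finset.mem_filter, mem_skelC]
          constructor
          · rintro ⟨⟨hEV, hEc⟩, hvE⟩
            exact ⟨fun x hx => Finset.mem_erase.mpr ⟨fun h => hvE (h ▸ hx), hEV hx⟩, hEc⟩
          · rintro ⟨hEe, hEc⟩
            exact ⟨⟨hEe.trans (erase_subset _ _), hEc⟩,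
              fun h => (Finset.mem_erase.mp (hEe h)).1 rfl⟩
        refine VertexDecomposable.shed _ v (hlink ▸ IH _ _ herase) (hdel ▸ IH _ _ herase) ?_
        intro F hF
        obtain ⟨hFmem, hFmax⟩ := hF
        rw [delC, Finset.mem_filter] at hFmem
        obtain ⟨hFs, hvF⟩ := hFmem
        rw [mem_skelC] at hFs
        have hFcard : F.card = k + 1 := by
          by_contra hne
          have hlt : F.card ≤ k := by omega
          have hns : ¬ (V.erase v ⊆ F) := fun h => by
            have := card_le_card h
            rw [card_erase_of_mem hv] at this; omega
          obtain ⟨x, hxV, hxF⟩ := Finset.not_subset.mp hns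
          have hmem : insert x F ∈ delC (skelC V (k + 1)) v := by
            rw [delC, Finset.mem_filter, mem_skelC]
            refine ⟨⟨Finset.insert_subset ((erase_subset _ _) hxV) hFs.1, ?_⟩, ?_⟩
            · rw [Finset.card_insert_of_notMem hxF]; omega
            · simp only [Finset.mem_insert, not_or]
              exact ⟨fun h => (Finset.mem_erase.mp hxV).1 h.symm, hvF⟩
          have := hFmax _ hmem (subset_insert _ _)
          exact hxF (this ▸ mem_insert_self x F)
        refine ⟨mem_skelC.mpr hFs, fun G hG hsub => ?_⟩
        rw [mem_skelC] at hG
        exact Finset.eq_of_subset_of_card_le hsub (by omega)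

theorem uio_main : ∀ (N : ℕ) (d : ℕ) (Δ : Finset (Finset ℕ)),
    Δ.card ≤ N → IsComplex Δ → IsPure d Δ → UnitIntervalOrder d Δ →
    (∃ F, IsFacet Δ F) →
    (∀ F ∈ Δ, ∀ v ∈ F, 1 ≤ v) →
    (d = 0 ∨ ∀ a₁ a₂ a : ℕ, IsFacet Δ (Finset.Icc a₁ (a₁ + d)) →
        IsFacet Δ (Finset.Icc a₂ (a₂ + d)) → a₁ ≤ a → a ≤ a₂ →
        IsFacet Δ (Finset.Icc a (a + d))) →
    VertexDecomposable Δ := by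
  intro N
  induction N with
  | zero =>
    rintro d Δ hN - - - ⟨F, hF⟩ - -
    rw [card_eq_zero.mp (Nat.le_zero.mp hN)] at hF
    exact absurd hF.1 (Finset.notMem_empty F)
  | succ N IH =>
    rintro d Δ hN hC hP hU ⟨F₀, hF₀⟩ hpos hQ
    classical
    -- basic facts about facets
    have hfne : ∀ {F : Finset ℕ}, IsFacet Δ F → F.Nonempty := by
      intro F hF
      have := hP F hF
      exact card_pos.mp (by omega)
    have hspanlen : ∀ (F : Finset ℕ) (hF : IsFacet Δ F) (h : F.Nonempty),
        F.min' h + d ≤ F.max' h := by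
      intro F hF h
      have hsub : F ⊆ Finset.Icc (F.min' h) (F.max' h) :=
        fun x hx => mem_Icc.mpr ⟨min'_le _ _ hx, le_max' _ _ hx⟩
      have hc := card_le_card hsub
      rw [Nat.card_Icc, hP F hF] at hc
      omega
    have hwindow : ∀ (F : Finset ℕ) (hF : IsFacet Δ F) (h : F.Nonempty) (c : ℕ),
        F.min' h ≤ c → c + d ≤ F.max' h → IsFacet Δ (Finset.Icc c (c + d)) := by
      intro F hF h c h1 h2
      exact hU F hF h _ (Finset.Icc_subset_Icc h1 h2) (by rw [Nat.card_Icc]; omega)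
    -- the maximal vertex M
    have hF₀ne := hfne hF₀
    have hVne : (Δ.sup id).Nonempty :=
      ⟨F₀.min' hF₀ne, mem_sup.mpr ⟨F₀, hF₀.1, F₀.min'_mem hF₀ne⟩⟩
    set M := (Δ.sup id).max' hVne with hMdef
    have hMax : ∀ {F : Finset ℕ} {v : ℕ}, F ∈ Δ → v ∈ F → v ≤ M :=
      fun hF hv => le_max' _ _ (mem_sup.mpr ⟨_, hF, hv⟩)
    have hMmem : ∃ F ∈ Δ, M ∈ F := mem_sup.mp (max'_mem _ hVne)
    have hfacetmax : ∀ (F : Finset ℕ) (hF : IsFacet Δ F) (h : F.Nonempty),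
        M ∈ F → F.max' h = M :=
      fun F hF h hMF => le_antisymm (hMax hF.1 (max'_mem F h)) (le_max' F M hMF)
    -- long-span facets containing M can be deformed away from M
    have hlong : ∀ (H : Finset ℕ) (hH : IsFacet Δ H) (h : H.Nonempty), M ∈ H →
        H.min' h + d < M → ∃ G, IsFacet Δ G ∧ M ∉ G ∧ H.erase M ⊆ G := by
      intro H hH h hMH hlt
      have hmax := hfacetmax H hH h hMH
      have hcardH := hP H hH
      have hsub : H ⊆ Finset.Icc (H.min' h) (H.max' h) :=
        fun x hx => mem_Icc.mpr ⟨min'_le _ _ hx, le_max' _ _ hx⟩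
      have hns : ¬ (Finset.Icc (H.min' h) (H.max' h) ⊆ H) := by
        intro hs
        have := card_le_card hs
        rw [Nat.card_Icc, hcardH, hmax] at this
        omega
      obtain ⟨x, hx1, hx2⟩ := Finset.not_subset.mp hns
      have hxM : x ≠ M := fun he => hx2 (he ▸ hMH)
      have hGsub : insert x (H.erase M) ⊆ Finset.Icc (H.min' h) (H.max' h) :=
        Finset.insert_subset hx1 ((erase_subset _ _).trans hsub)
      have hGcard : (insert x (H.erase M)).card = d + 1 := by
        rw [Finset.card_insert_of_notMem (fun hc => hx2 ((erase_subset _ _) hc)),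
          card_erase_of_mem hMH, hcardH]
        omega
      refine ⟨insert x (H.erase M), hU H hH h _ hGsub hGcard, ?_, subset_insert _ _⟩
      simp only [Finset.mem_insert, Finset.mem_erase, not_or]
      exact ⟨fun he => hxM he.symm, fun hc => hc.1 rfl⟩
    by_cases hG0 : ∃ G, IsFacet Δ G ∧ M ∉ G
    · -- shedding case
      obtain ⟨G₀, hG₀f, hG₀M⟩ := hG0
      -- key: for every facet containing M, its erasure extends to a facet avoiding M
      have hkey : ∀ (H : Finset ℕ), IsFacet Δ H → M ∈ H →
          ∃ G, IsFacet Δ G ∧ M ∉ G ∧ H.erase M ⊆ G := by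
        intro H hH hMH
        have h := hfne hH
        by_cases hlt : H.min' h + d < M
        · exact hlong H hH h hMH hlt
        · have hmax := hfacetmax H hH h hMH
          have hlen := hspanlen H hH h
          rw [hmax] at hlen
          have hmin : H.min' h = M - d := by omega
          rcases hQ with hd0 | hQ
          · subst hd0
            refine ⟨G₀, hG₀f, hG₀M, ?_⟩
            intro x hx
            obtain ⟨hx1, hx2⟩ := Finset.mem_erase.mp hx
            exfalso
            apply hx1
            have h1 := min'_le _ _ hx2
            have h2 := le_max' _ _ hx2
            omega
          · have h0 := hfne hG₀f
            have hle0 : G₀.max' h0 ≤ M := hMax hG₀f.1 (max'_mem _ h0)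
            have hne0 : G₀.max' h0 ≠ M := fun he => hG₀M (he ▸ max'_mem _ h0)
            have hlen0 := hspanlen G₀ hG₀f h0
            have h1pos : 1 ≤ H.min' h := hpos H hH.1 _ (min'_mem _ _)
            have hMd : d + 1 ≤ M := by omega
            have hW1 : IsFacet Δ (Finset.Icc (G₀.max' h0 - d) (G₀.max' h0 - d + d)) :=
              hwindow G₀ hG₀f h0 _ (by omega) (by omega)
            have hW2 : IsFacet Δ (Finset.Icc (M - d) (M - d + d)) :=
              hwindow H hH h _ (by omega) (by omega)
            have hW3 := hQ _ _ (M - d - 1) hW1 hW2 (by omega) (by omega)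
            refine ⟨_, hW3, ?_, ?_⟩
            · rw [Finset.mem_Icc]; omega
            · intro x hx
              obtain ⟨hx1, hx2⟩ := Finset.mem_erase.mp hx
              have h1 := min'_le _ _ hx2
              have h2 := hMax hH.1 hx2
              rw [Finset.mem_Icc]
              omega
      -- facets of Δ avoiding M are facets of the deletion, and conversely
      have hdel_facet : ∀ (G : Finset ℕ), IsFacet Δ G → M ∉ G → IsFacet (delC Δ M) G := by
        intro G hG hMG
        exact ⟨Finset.mem_filter.mpr ⟨hG.1, hMG⟩,
          fun K hK hsub => hG.2 K (Finset.mem_filter.mp hK).1 hsub⟩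
      have hAshed : ∀ F, IsFacet (delC Δ M) F → IsFacet Δ F := by
        intro F hF
        have hF1 := Finset.mem_filter.mp hF.1
        obtain ⟨H, hH, hFH⟩ := exists_facet_superset hF1.1
        by_cases hMH : M ∈ H
        · obtain ⟨G, hG, hMG, hsub⟩ := hkey H hH hMH
          have hFG : F ⊆ G := fun x hx =>
            hsub (Finset.mem_erase.mpr ⟨fun he => hF1.2 (he ▸ hx), hFH hx⟩)
          have := hF.2 G (Finset.mem_filter.mpr ⟨hG.1, hMG⟩) hFG
          exact this ▸ hG
        · exact (hF.2 H (Finset.mem_filter.mpr ⟨hH.1, hMH⟩) hFH) ▸ hH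
      -- deletion is vertex decomposable by induction
      have hMone : {M} ∈ Δ := by
        obtain ⟨F, hF, hMF⟩ := hMmem
        exact hC F hF {M} (singleton_subset_iff.mpr hMF)
      have hdelcard : (delC Δ M).card ≤ N := by
        have hssub : delC Δ M ⊂ Δ := by
          refine ⟨filter_subset _ _, fun hsup => ?_⟩
          have := (Finset.mem_filter.mp (hsup hMone)).2
          simp at this
        have := card_lt_card hssub
        omega
      have hdelC : IsComplex (delC Δ M) := by
        intro F hF G hG
        rw [delC, Finset.mem_filter] at hF ⊢
        exact ⟨hC F hF.1 G hG, fun hMG => hF.2 (hG hMG)⟩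
      have hdelP : IsPure d (delC Δ M) := fun F hF => hP F (hAshed F hF)
      have hdelU : UnitIntervalOrder d (delC Δ M) := by
        intro F hF h S hS hcard
        have hFΔ := hAshed F hF
        have hSf := hU F hFΔ h S hS hcard
        apply hdel_facet S hSf
        have hmaxlt : F.max' h < M :=
          lt_of_le_of_ne (hMax hFΔ.1 (max'_mem _ _))
            (fun he => (Finset.mem_filter.mp hF.1).2 (he ▸ max'_mem _ _))
        intro hMS
        have := (mem_Icc.mp (hS hMS)).2
        omega
      have hdelex : ∃ F, IsFacet (delC Δ M) F := ⟨G₀, hdel_facet G₀ hG₀f hG₀M⟩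
      have hdelpos : ∀ F ∈ delC Δ M, ∀ v ∈ F, 1 ≤ v :=
        fun F hF => hpos F (Finset.mem_filter.mp hF).1
      have hdelQ : d = 0 ∨ ∀ a₁ a₂ a : ℕ, IsFacet (delC Δ M) (Finset.Icc a₁ (a₁ + d)) →
          IsFacet (delC Δ M) (Finset.Icc a₂ (a₂ + d)) → a₁ ≤ a → a ≤ a₂ →
          IsFacet (delC Δ M) (Finset.Icc a (a + d)) := by
        rcases hQ with h | hQ
        · exact Or.inl h
        right
        intro a₁ a₂ a h1 h2 hle1 hle2
        have h1' := hAshed _ h1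
        have h2' := hAshed _ h2
        have hfac := hQ a₁ a₂ a h1' h2' hle1 hle2
        apply hdel_facet _ hfac
        have hM2 : M ∉ Finset.Icc a₂ (a₂ + d) := (Finset.mem_filter.mp h2.1).2
        have hub : a₂ + d ≤ M := hMax h2'.1 (mem_Icc.mpr ⟨by omega, le_refl _⟩)
        rw [Finset.mem_Icc] at hM2 ⊢
        omega
      have hdelVD := IH d (delC Δ M) hdelcard hdelC hdelP hdelU hdelex hdelpos hdelQ
      -- the link is a skeleton complex
      obtain ⟨Fm0, hFm0, hMFm0⟩ := hMmem
      obtain ⟨H₁, hH₁, hFH₁⟩ := exists_facet_superset hFm0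
      have hMH₁ : M ∈ H₁ := hFH₁ hMFm0
      have hPne : ((facets Δ).filter (fun F => M ∈ F)).Nonempty :=
        ⟨H₁, by rw [Finset.mem_filter, mem_facets_iff]; exact ⟨hH₁, hMH₁⟩⟩
      obtain ⟨Hm, hHmP, hHmmin⟩ :=
        Finset.exists_min_image _ (fun F => WithTop.untopD 0 F.min) hPne
      rw [Finset.mem_filter, mem_facets_iff] at hHmP
      obtain ⟨hHmf, hMHm⟩ := hHmP
      have hm := hfne hHmf
      have hunbot : ∀ (F : Finset ℕ) (h : F.Nonempty), WithTop.untopD 0 F.min = F.min' h :=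
        fun F h => by rw [← Finset.coe_min' h, WithTop.untopD_coe]
      have hamin : ∀ (F : Finset ℕ) (hF : IsFacet Δ F) (h : F.Nonempty), M ∈ F →
          Hm.min' hm ≤ F.min' h := by
        intro F hF h hMF
        have := hHmmin F (by rw [Finset.mem_filter, mem_facets_iff]; exact ⟨hF, hMF⟩)
        rwa [hunbot _ hm, hunbot _ h] at this
      have hmaxm : Hm.max' hm = M := hfacetmax Hm hHmf hm hMHm
      have haM : Hm.min' hm + d ≤ M := by
        have := hspanlen Hm hHmf hm; omega
      have hapos : 1 ≤ Hm.min' hm := hpos Hm hHmf.1 _ (min'_mem _ _)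
      have hlink : linkC Δ M = skelC (Finset.Icc (Hm.min' hm) (M - 1)) d := by
        ext E
        rw [linkC, Finset.mem_filter, mem_skelC]
        constructor
        · rintro ⟨hEΔ, hME, hins⟩
          obtain ⟨F, hF, hsubF⟩ := exists_facet_superset hins
          have hMF : M ∈ F := hsubF (mem_insert_self _ _)
          have hf := hfne hF
          constructor
          · intro x hxE
            have hxF : x ∈ F := hsubF (mem_insert_of_mem hxE)
            have h1 : Hm.min' hm ≤ x := le_trans (hamin F hF hf hMF) (min'_le _ _ hxF)
            have h2 : x ≤ M := hMax hF.1 hxF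
            have h3 : x ≠ M := fun he => hME (he ▸ hxE)
            rw [Finset.mem_Icc]
            omega
          · have hcard := hP F hF
            have := card_le_card hsubF
            rw [Finset.card_insert_of_notMem hME, hcard] at this
            omega
        · rintro ⟨hEsub, hEcard⟩
          have hME : M ∉ E := by
            intro hME
            have := (mem_Icc.mp (hEsub hME)).2
            omega
          have hsubIcc : insert M E ⊆ Finset.Icc (Hm.min' hm) M := by
            intro x hx
            rcases Finset.mem_insert.mp hx with rfl | hxE
            · rw [Finset.mem_Icc]; omega
            · have := mem_Icc.mp (hEsub hxE)
              rw [Finset.mem_Icc]; omega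
          have hcardle : (insert M E).card ≤ d + 1 := by
            rw [Finset.card_insert_of_notMem hME]; omega
          have hIccCard : d + 1 ≤ (Finset.Icc (Hm.min' hm) M).card := by
            rw [Nat.card_Icc]; omega
          obtain ⟨S, hS1, hS2, hS3⟩ :=
            Finset.exists_subsuperset_card_eq hsubIcc hcardle hIccCard
          have hSf : IsFacet Δ S := by
            apply hU Hm hHmf hm S _ hS3
            rwa [hmaxm]
          have hinsΔ : insert M E ∈ Δ := hC S hSf.1 _ hS1
          exact ⟨hC _ hinsΔ E (subset_insert _ _), hME, hinsΔ⟩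
      exact VertexDecomposable.shed Δ M
        (hlink ▸ skelC_vd _ _ _ le_rfl) hdelVD hAshed
    · -- simplex case
      push_neg at hG0
      have huniq : ∀ (G : Finset ℕ), IsFacet Δ G → G = Finset.Icc (M - d) M := by
        intro G hG
        have h := hfne hG
        have hMG := hG0 G hG
        have hmax := hfacetmax G hG h hMG
        have hlen := hspanlen G hG h
        rw [hmax] at hlen
        have hnlt : ¬ (G.min' h + d < M) := by
          intro hlt
          obtain ⟨G', hG', hMG', _⟩ := hlong G hG h hMG hlt
          exact hMG' (hG0 G' hG')
        have hmin : G.min' h = M - d := by omega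
        apply Finset.eq_of_subset_of_card_le
        · intro x hx
          have h1 := min'_le _ _ hx
          have h2 := le_max' _ _ hx
          rw [Finset.mem_Icc]
          omega
        · rw [Nat.card_Icc, hP G hG]
          omega
      have hΔ : Δ = (Finset.Icc (M - d) M).powerset := by
        ext E
        rw [Finset.mem_powerset]
        constructor
        · intro hE
          obtain ⟨F, hF, hEF⟩ := exists_facet_superset hE
          exact (huniq F hF) ▸ hEF
        · intro hE
          exact hC _ ((huniq F₀ hF₀) ▸ hF₀.1) E hE
      rw [hΔ]
      exact VertexDecomposable.simplex _

open Finset in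
lemma walk_Q (d : ℕ) (Δ : Finset (Finset ℕ)) (hP : IsPure d Δ) (hU : UnitIntervalOrder d Δ)
    (hd : 1 ≤ d) (F G : {F // F ∈ facets Δ}) (w : (dualGraph d Δ).Walk F G) :
    ∀ a : ℕ,
      ((maxv F.1 - d ≤ a ∧ a ≤ maxv G.1 - d) ∨ (maxv G.1 - d ≤ a ∧ a ≤ maxv F.1 - d)) →
      IsFacet Δ (Finset.Icc a (a + d)) := by
  have hfne : ∀ {K : Finset ℕ}, IsFacet Δ K → K.Nonempty := by
    intro K hK
    have := hP K hK
    exact card_pos.mp (by omega)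
  have hwindow : ∀ (K : Finset ℕ), IsFacet Δ K → ∀ c : ℕ, minv K ≤ c → c + d ≤ maxv K →
      IsFacet Δ (Finset.Icc c (c + d)) := by
    intro K hK c h1 h2
    have h := hfne hK
    rw [minv_eq h] at h1
    rw [maxv_eq h] at h2
    exact hU K hK h _ (Finset.Icc_subset_Icc h1 h2) (by rw [Nat.card_Icc]; omega)
  have hs : ∀ (K : Finset ℕ), IsFacet Δ K → minv K + d ≤ maxv K := by
    intro K hK
    have h := hfne hK
    have hsub : K ⊆ Finset.Icc (K.min' h) (K.max' h) :=
      fun x hx => mem_Icc.mpr ⟨min'_le _ _ hx, le_max' _ _ hx⟩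
    have hc := card_le_card hsub
    rw [Nat.card_Icc, hP K hK] at hc
    rw [minv_eq h, maxv_eq h]
    omega
  have hadjb : ∀ (K L : Finset ℕ), IsFacet Δ K → IsFacet Δ L → (K ∩ L).card = d →
      minv L ≤ maxv K + 1 - d := by
    intro K L hK hL hcard
    have hKne := hfne hK
    have hLne := hfne hL
    have hsub : K ∩ L ⊆ Finset.Icc (L.min' hLne) (K.max' hKne) := fun x hx =>
      mem_Icc.mpr ⟨min'_le _ _ (Finset.mem_inter.mp hx).2, le_max' _ _ (Finset.mem_inter.mp hx).1⟩
    have hc := card_le_card hsub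
    rw [Nat.card_Icc, hcard] at hc
    rw [minv_eq hLne, maxv_eq hKne]
    omega
  induction w with
  | nil =>
    intro a ha
    rename_i K
    have hKf : IsFacet Δ K.1 := mem_facets_iff.mp K.2
    have h1 := hs K.1 hKf
    exact hwindow K.1 hKf a (by omega) (by omega)
  | @cons K v G' hadj p ih =>
    intro a ha
    have hKf : IsFacet Δ K.1 := mem_facets_iff.mp K.2
    have hvf : IsFacet Δ v.1 := mem_facets_iff.mp v.2
    have hGf : IsFacet Δ G'.1 := mem_facets_iff.mp G'.2
    have hinter : (K.1 ∩ v.1).card = d := by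
      have := (SimpleGraph.fromRel_adj _ _ _).mp hadj
      rcases this.2 with h | h
      · exact h
      · rwa [Finset.inter_comm]
    have hb1 := hadjb K.1 v.1 hKf hvf hinter
    have hb2 := hadjb v.1 K.1 hvf hKf (by rwa [Finset.inter_comm])
    have hsK := hs K.1 hKf
    have hsv := hs v.1 hvf
    have hsG := hs G'.1 hGf
    by_cases hcase : (maxv K.1 - d ≤ a ∧ a ≤ maxv v.1 - d) ∨
        (maxv v.1 - d ≤ a ∧ a ≤ maxv K.1 - d)
    · rcases hcase with ⟨hx, hy⟩ | ⟨hy, hx⟩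
      · by_cases hmv : minv v.1 ≤ a
        · exact hwindow v.1 hvf a hmv (by omega)
        · exact hwindow K.1 hKf a (by omega) (by omega)
      · by_cases hmK : minv K.1 ≤ a
        · exact hwindow K.1 hKf a hmK (by omega)
        · exact hwindow v.1 hvf a (by omega) (by omega)
    · exact ih a (by omega)

theorem stmt3 (n d : ℕ) (Δ : Finset (Finset ℕ))
    (hC : IsComplex Δ) (hP : IsPure d Δ) (hSC : StronglyConnected d Δ)
    (hU : UnitIntervalOrder d Δ) (hV : Δ.sup id ⊆ Finset.Icc 1 n) :
    VertexDecomposable Δ := by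
  have hex : ∃ F, IsFacet Δ F := by
    obtain ⟨⟨F, hF⟩⟩ := hSC.nonempty
    exact ⟨F, mem_facets_iff.mp hF⟩
  have hpos : ∀ F ∈ Δ, ∀ v ∈ F, 1 ≤ v := by
    intro F hF v hv
    have hvs : v ∈ Δ.sup id := mem_sup.mpr ⟨F, hF, hv⟩
    exact (mem_Icc.mp (hV hvs)).1
  rcases Nat.eq_zero_or_pos d with hd | hd
  · exact uio_main Δ.card d Δ le_rfl hC hP hU hex hpos (Or.inl hd)
  · refine uio_main Δ.card d Δ le_rfl hC hP hU hex hpos (Or.inr ?_)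
    intro a₁ a₂ a h1 h2 hle1 hle2
    have hmaxIcc : ∀ b : ℕ, maxv (Finset.Icc b (b + d)) = b + d := by
      intro b
      have hne : (Finset.Icc b (b + d)).Nonempty := ⟨b, mem_Icc.mpr ⟨le_refl _, by omega⟩⟩
      rw [maxv_eq hne]
      exact le_antisymm (max'_le _ _ _ (fun x hx => (mem_Icc.mp hx).2))
        (le_max' _ _ (mem_Icc.mpr ⟨by omega, le_refl _⟩))
    obtain ⟨w⟩ := hSC.preconnected ⟨_, mem_facets_iff.mpr h1⟩ ⟨_, mem_facets_iff.mpr h2⟩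
    refine walk_Q d Δ hP hU hd _ _ w a (Or.inl ?_)
    constructor
    · show maxv (Finset.Icc a₁ (a₁ + d)) - d ≤ a
      rw [hmaxIcc]; omega
    · show a ≤ maxv (Finset.Icc a₂ (a₂ + d)) - d
      rw [hmaxIcc]; omega
end

section
/- In the pure d-dimensional complex Δ on [d+3] with facets {1,...,d+1}, {1,...,d}∪{d+2}, {1,...,d}∪{d+3}, {2,...,d+2}, {3,...,d+3} (for d ≥ 2), the link of the vertex d+3 is the complex with exactly two facets {1,...,d} and {3,...,d+2}, which share a face of size d-2; hence this link is not shellable. -/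
open Finset

/-- The simplicial complex generated by a finite family of faces. -/
def genComplex (S : Finset (Finset ℕ)) : Finset (Finset ℕ) := S.sup Finset.powerset

/-- The pure `d`-dimensional complex on `[d+3]` with facets `{1, …, d, d+1}`,
`{1, …, d, d+2}`, `{1, …, d, d+3}`, `{2, …, d+1, d+2}` and `{3, …, d+2, d+3}`. -/
def intervalExample (d : ℕ) : Finset (Finset ℕ) :=
  genComplex {Finset.Icc 1 (d + 1), insert (d + 2) (Finset.Icc 1 d),
    insert (d + 3) (Finset.Icc 1 d), Finset.Icc 2 (d + 2), Finset.Icc 3 (d + 3)}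


lemma mem_genComplex13 {S : Finset (Finset ℕ)} {E : Finset ℕ} :
    E ∈ genComplex S ↔ ∃ F ∈ S, E ⊆ F := by
  simp [genComplex, Finset.mem_sup, Finset.mem_powerset]

lemma link_eq13 (d : ℕ) (hd : 2 ≤ d) :
    linkC (intervalExample d) (d + 3) =
      (Finset.Icc 1 d).powerset ∪ (Finset.Icc 3 (d + 2)).powerset := by
  ext E
  rw [linkC, Finset.mem_filter]
  simp only [linkC, Finset.mem_filter, intervalExample, mem_genComplex13,
    Finset.mem_insert, Finset.mem_singleton, Finset.mem_union, Finset.mem_powerset]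
  constructor
  · rintro ⟨-, hv, F, hF, hsub⟩
    have h3 : d + 3 ∈ F := hsub (Finset.mem_insert_self _ _)
    rcases hF with rfl | rfl | rfl | rfl | rfl
    · have := Finset.mem_Icc.1 h3; omega
    · rcases Finset.mem_insert.1 h3 with h | h
      · omega
      · have := Finset.mem_Icc.1 h; omega
    · left
      intro x hx
      rcases Finset.mem_insert.1 (hsub (Finset.mem_insert_of_mem hx)) with h | h
      · exact absurd (h ▸ hx) hv
      · exact h
    · have := Finset.mem_Icc.1 h3; omega
    · right
      intro x hx
      have h1 := Finset.mem_Icc.1 (hsub (Finset.mem_insert_of_mem hx))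
      have h2 : x ≠ d + 3 := fun h => hv (h ▸ hx)
      exact Finset.mem_Icc.2 ⟨h1.1, by omega⟩
  · rintro (hE | hE)
    · refine ⟨⟨Finset.Icc 1 (d + 1), by tauto,
        hE.trans (Finset.Icc_subset_Icc_right (by omega))⟩, ?_, ?_⟩
      · intro h
        have := Finset.mem_Icc.1 (hE h); omega
      · exact ⟨insert (d + 3) (Finset.Icc 1 d), by tauto,
          Finset.insert_subset_insert _ hE⟩
    · refine ⟨⟨Finset.Icc 2 (d + 2), by tauto,
        hE.trans (Finset.Icc_subset_Icc_left (by omega))⟩, ?_, ?_⟩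
      · intro h
        have := Finset.mem_Icc.1 (hE h); omega
      · refine ⟨Finset.Icc 3 (d + 3), by tauto, Finset.insert_subset ?_
          (hE.trans (Finset.Icc_subset_Icc_right (by omega)))⟩
        exact Finset.mem_Icc.2 ⟨by omega, le_refl _⟩

lemma facets_link13 (d : ℕ) (hd : 2 ≤ d) :
    facets ((Finset.Icc 1 d).powerset ∪ (Finset.Icc 3 (d + 2)).powerset) =
      {Finset.Icc 1 d, Finset.Icc 3 (d + 2)} := by
  have h1 : (1 : ℕ) ∈ Finset.Icc 1 d := by simp [Finset.mem_Icc]; omega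
  have h1' : (1 : ℕ) ∉ Finset.Icc 3 (d + 2) := by simp [Finset.mem_Icc]
  have h2 : d + 2 ∈ Finset.Icc 3 (d + 2) := by simp [Finset.mem_Icc]; omega
  have h2' : d + 2 ∉ Finset.Icc 1 d := by simp [Finset.mem_Icc]
  ext F
  simp only [facets, Finset.mem_filter, Finset.mem_union, Finset.mem_powerset,
    Finset.mem_insert, Finset.mem_singleton]
  constructor
  · rintro ⟨hF | hF, hmax⟩
    · left; exact hmax _ (Or.inl Finset.Subset.rfl) hF
    · right; exact hmax _ (Or.inr Finset.Subset.rfl) hF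
  · rintro (rfl | rfl)
    · refine ⟨Or.inl Finset.Subset.rfl, ?_⟩
      rintro G (hG | hG) hsub
      · exact Finset.Subset.antisymm hsub hG
      · exact absurd (hG (hsub h1)) h1'
    · refine ⟨Or.inr Finset.Subset.rfl, ?_⟩
      rintro G (hG | hG) hsub
      · exact absurd (hG (hsub h2)) h2'
      · exact Finset.Subset.antisymm hsub hG

theorem stmt13 (d : ℕ) (hd : 2 ≤ d) :
    linkC (intervalExample d) (d + 3) =
      (Finset.Icc 1 d).powerset ∪ (Finset.Icc 3 (d + 2)).powerset ∧
    facets (linkC (intervalExample d) (d + 3)) = {Finset.Icc 1 d, Finset.Icc 3 (d + 2)} ∧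
    (Finset.Icc 1 d ∩ Finset.Icc 3 (d + 2)).card = d - 2 ∧
    ¬ Shellable (d - 1) (linkC (intervalExample d) (d + 3)) := by
  have hlink := link_eq13 d hd
  have hfac : facets (linkC (intervalExample d) (d + 3)) =
      {Finset.Icc 1 d, Finset.Icc 3 (d + 2)} := by
    rw [hlink]; exact facets_link13 d hd
  have hAB : Finset.Icc 1 d ≠ Finset.Icc 3 (d + 2) := by
    intro h
    have h1 : (1 : ℕ) ∈ Finset.Icc 1 d := by simp [Finset.mem_Icc]; omega
    rw [h] at h1
    simp [Finset.mem_Icc] at h1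
  have hcap : (Finset.Icc 1 d ∩ Finset.Icc 3 (d + 2)).card = d - 2 := by
    have h : Finset.Icc 1 d ∩ Finset.Icc 3 (d + 2) = Finset.Icc 3 d := by
      ext x; simp [Finset.mem_Icc]; omega
    rw [h, Nat.card_Icc]
    omega
  refine ⟨hlink, hfac, hcap, ?_⟩
  rintro ⟨L, hnd, htf, hcond⟩
  rw [hfac] at htf
  have hlen : L.length = 2 := by
    rw [← List.toFinset_card_of_nodup hnd, htf, Finset.card_pair hAB]
  obtain ⟨a, b, rfl⟩ : ∃ a b, L = [a, b] := by
    rcases L with _ | ⟨a, L⟩; · simp at hlen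
    rcases L with _ | ⟨b, L⟩; · simp at hlen
    rcases L with _ | ⟨c, L⟩; · exact ⟨a, b, rfl⟩
    simp at hlen
  obtain ⟨⟨τ, hτb, hτcard, G, hG, hτG⟩, -⟩ := hcond 0 (by omega)
  have hGa : G = a := by simpa using hG
  have hτa : τ ⊆ a := hGa ▸ hτG
  have hτb' : τ ⊆ b := hτb
  have hab : a ≠ b := by
    simp only [List.nodup_cons, List.mem_singleton] at hnd
    exact hnd.1
  have ha : a ∈ ({Finset.Icc 1 d, Finset.Icc 3 (d + 2)} : Finset (Finset ℕ)) := by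
    rw [← htf]; simp
  have hb : b ∈ ({Finset.Icc 1 d, Finset.Icc 3 (d + 2)} : Finset (Finset ℕ)) := by
    rw [← htf]; simp
  simp only [Finset.mem_insert, Finset.mem_singleton] at ha hb
  have hle : τ.card ≤ (Finset.Icc 1 d ∩ Finset.Icc 3 (d + 2)).card := by
    rcases ha with rfl | rfl <;> rcases hb with rfl | rfl
    · exact absurd rfl hab
    · exact Finset.card_le_card (Finset.subset_inter hτa hτb')
    · rw [Finset.inter_comm]
      exact Finset.card_le_card (Finset.subset_inter hτa hτb')
    · exact absurd rfl hab
  rw [hcap, hτcard] at hle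
  omega
end

section
/- If Δ is a pure strongly connected d-dimensional simplicial complex on [n] with a unit interval order and every vertex lies in a facet, then for every i with 1 ≤ i ≤ n-d, the gap-free set H_i = {i, i+1, ..., i+d} is a facet of Δ. -/
open Finset

lemma extend_to_facet (Δ : Finset (Finset ℕ)) {F : Finset ℕ} (hF : F ∈ Δ) :
    ∃ G, IsFacet Δ G ∧ F ⊆ G := by
  obtain ⟨G, hG, hmax⟩ := (Δ.filter fun G => F ⊆ G).exists_maximal
    ⟨F, by simp [hF]⟩
  simp only [mem_filter] at hG
  refine ⟨G, ⟨hG.1, fun H hH hGH => ?_⟩, hG.2⟩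
  by_contra hne
  exact hne (le_antisymm hGH (hmax (mem_filter.mpr ⟨hH, hG.2.trans hGH⟩) hGH))

theorem stmt16 (n d : ℕ) (Δ : Finset (Finset ℕ))
    (hC : IsComplex Δ) (hP : IsPure d Δ) (hSC : StronglyConnected d Δ)
    (hU : UnitIntervalOrder d Δ) (hV : Δ.sup id = Finset.Icc 1 n) :
    ∀ i, 1 ≤ i → i + d ≤ n → IsFacet Δ (Finset.Icc i (i + d)) := by
  -- every facet is nonempty
  have hfne : ∀ F, IsFacet Δ F → F.Nonempty := fun F h =>
    card_pos.mp (by rw [hP F h]; omega)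
  -- every face is contained in Icc 1 n
  have hsub : ∀ F ∈ Δ, F ⊆ Finset.Icc 1 n := by
    intro F hF
    rw [← hV]
    exact le_sup (f := id) hF
  -- max' ≥ min' + d for facets
  have hspread : ∀ F (h : IsFacet Δ F), F.min' (hfne F h) + d ≤ F.max' (hfne F h) := by
    intro F h
    have h1 : F ⊆ Finset.Icc (F.min' (hfne F h)) (F.max' (hfne F h)) := by
      intro x hx
      simp [mem_Icc, min'_le F x hx, le_max' F x hx]
    have := card_le_card h1
    rw [hP F h, Nat.card_Icc] at this
    omega
  intro i hi1 hin
  rcases Nat.eq_zero_or_pos d with hd | hd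
  · -- d = 0
    subst hd
    have hiIcc : i ∈ Finset.Icc 1 n := by simp [mem_Icc]; omega
    rw [← hV, Finset.mem_sup] at hiIcc
    obtain ⟨F, hF, hiF⟩ := hiIcc
    obtain ⟨G, hG, hFG⟩ := extend_to_facet Δ hF
    have hcard := hP G hG
    have : G = {i} := by
      apply Finset.eq_singleton_iff_unique_mem.mpr
      refine ⟨hFG hiF, fun x hx => ?_⟩
      have := Finset.card_le_one.mp (le_of_eq hcard) x hx i (hFG hiF)
      exact this
    simpa [this] using hG
  · -- d ≥ 1
    -- get facet containing 1 and facet containing n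
    have h1mem : (1 : ℕ) ∈ Finset.Icc 1 n := by simp [mem_Icc]; omega
    have hnmem : n ∈ Finset.Icc 1 n := by simp [mem_Icc]; omega
    rw [← hV, Finset.mem_sup] at h1mem hnmem
    obtain ⟨F₀, hF₀, h1F₀⟩ := h1mem
    obtain ⟨Fₙ, hFₙ, hnFₙ⟩ := hnmem
    obtain ⟨G₀, hG₀, hFG₀⟩ := extend_to_facet Δ hF₀
    obtain ⟨Gₙ, hGₙ, hFGₙ⟩ := extend_to_facet Δ hFₙ
    have h1G₀ : (1:ℕ) ∈ G₀ := hFG₀ h1F₀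
    have hnGₙ : n ∈ Gₙ := hFGₙ hnFₙ
    have hminG₀ : G₀.min' (hfne _ hG₀) ≤ i := le_trans (min'_le _ _ h1G₀) hi1
    have hmaxGₙ : i + d ≤ Gₙ.max' (hfne _ hGₙ) := le_trans hin (le_max' _ _ hnGₙ)
    -- membership in facets
    have hmemfac : ∀ F, IsFacet Δ F → F ∈ facets Δ := by
      intro F h; exact mem_filter.mpr ⟨h.1, h.2⟩
    have hfacmem : ∀ F, F ∈ facets Δ → IsFacet Δ F := by
      intro F h; exact ⟨(mem_filter.mp h).1, (mem_filter.mp h).2⟩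
    -- adjacency lemma
    have hadj : ∀ (A B : {F // F ∈ facets Δ}), (dualGraph d Δ).Adj A B →
        (B : Finset ℕ).min' (hfne _ (hfacmem _ B.2)) + d ≤
        (A : Finset ℕ).max' (hfne _ (hfacmem _ A.2)) + 1 := by
      intro A B hAB
      rw [dualGraph, SimpleGraph.fromRel_adj] at hAB
      have hcard : ((A : Finset ℕ) ∩ (B : Finset ℕ)).card = d := by
        rcases hAB.2 with h | h
        · exact h
        · rwa [inter_comm]
      have hne : ((A : Finset ℕ) ∩ (B : Finset ℕ)).Nonempty :=
        card_pos.mp (by omega)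
      set I := (A : Finset ℕ) ∩ (B : Finset ℕ)
      have h1 : (B : Finset ℕ).min' (hfne _ (hfacmem _ B.2)) ≤ I.min' hne :=
        min'_le _ _ (inter_subset_right (min'_mem I hne))
      have h2 : I.max' hne ≤ (A : Finset ℕ).max' (hfne _ (hfacmem _ A.2)) :=
        le_max' _ _ (inter_subset_left (max'_mem I hne))
      have h3 : I ⊆ Finset.Icc (I.min' hne) (I.max' hne) := by
        intro x hx; simp [mem_Icc, min'_le I x hx, le_max' I x hx]
      have h4 := card_le_card h3
      rw [hcard, Nat.card_Icc] at h4
      omega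
    -- walk induction
    have key : ∀ (A B : {F // F ∈ facets Δ}), (dualGraph d Δ).Walk A B →
        (A : Finset ℕ).min' (hfne _ (hfacmem _ A.2)) ≤ i →
        i + d ≤ (B : Finset ℕ).max' (hfne _ (hfacmem _ B.2)) →
        ∃ F, ∃ h : IsFacet Δ F, F.min' (hfne F h) ≤ i ∧ i + d ≤ F.max' (hfne F h) := by
      intro A B w
      induction w with
      | nil =>
        rename_i u
        intro hA hB
        exact ⟨_, hfacmem _ u.2, hA, hB⟩
      | @cons u v x h p ih =>
        intro hA hB
        by_cases hc : i + d ≤ (u : Finset ℕ).max' (hfne _ (hfacmem _ u.2))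
        · exact ⟨_, hfacmem _ u.2, hA, hc⟩
        · push_neg at hc
          have := hadj u v h
          exact ih (by omega) hB
    obtain ⟨w⟩ := hSC.preconnected ⟨G₀, hmemfac _ hG₀⟩ ⟨Gₙ, hmemfac _ hGₙ⟩
    obtain ⟨F, hF, hmin, hmax⟩ := key _ _ w hminG₀ hmaxGₙ
    -- apply UIO
    apply hU F hF (hfne F hF)
    · intro x hx
      simp only [mem_Icc] at hx ⊢
      omega
    · rw [Nat.card_Icc]; omega
end

section
/- Let Δ be a pure d-dimensional complex on [n] with a unit interval order, let the facets be ordered lexicographically as F_1 < ... < F_m, and suppose F_{k+1} = {v_0 < v_1 < ... < v_d} has a gap at position i (i.e., there is x with v_{i-1} < x < v_i) with no gaps below position i (v_j = v_0 + j for j < i). Then for every subset v ⊆ {v_i,...,v_d} with |v| = d - i, the set {v_0,...,v_{i-1}, x} ∪ v is a facet of Δ that is lexicographically smaller than F_{k+1}. -/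
open Finset

lemma lex_aux : ∀ (l1 l2 : List ℕ), l1.Pairwise (· < ·) → l2.Pairwise (· < ·) →
    ∀ x, x ∈ l1 → x ∉ l2 → (∀ y, y < x → (y ∈ l1 ↔ y ∈ l2)) → (∃ z ∈ l2, x < z) →
    List.Lex (· < ·) l1 l2 := by
  intro l1
  induction l1 with
  | nil => intro l2 _ _ x hx; simp at hx
  | cons a t1 ih =>
    intro l2 h1 h2 x hx hxn hiff hz
    match l2, h2 with
    | [], _ => obtain ⟨z, hz, _⟩ := hz; simp at hz
    | b :: t2, h2 =>
      have hax : a ≤ x := by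
        rcases List.mem_cons.1 hx with rfl | hxt
        · exact le_rfl
        · exact le_of_lt (List.rel_of_pairwise_cons h1 (a' := x) hxt)
      rcases lt_trichotomy a b with hab | hab | hab
      · exact List.Lex.rel hab
      · subst hab
        have hxa : x ≠ a := fun h => hxn (h ▸ List.mem_cons_self (a := a) (l := t2))
        have hxt1 : x ∈ t1 := by
          rcases List.mem_cons.1 hx with h | h
          · exact absurd h hxa
          · exact h
        apply List.Lex.cons
        apply ih t2 (List.pairwise_cons.1 h1).2 (List.pairwise_cons.1 h2).2 x hxt1
        · intro hxt2; exact hxn (List.mem_cons_of_mem _ hxt2)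
        · intro y hy
          constructor
          · intro hyt1
            have h' := (hiff y hy).1 (List.mem_cons_of_mem _ hyt1)
            rcases List.mem_cons.1 h' with rfl | h'
            · exact absurd ((List.pairwise_cons.1 h1).1 y hyt1) (lt_irrefl y)
            · exact h'
          · intro hyt2
            have h' := (hiff y hy).2 (List.mem_cons_of_mem _ hyt2)
            rcases List.mem_cons.1 h' with rfl | h'
            · exact absurd ((List.pairwise_cons.1 h2).1 y hyt2) (lt_irrefl y)
            · exact h'
        · obtain ⟨z, hz2, hxz⟩ := hz
          rcases List.mem_cons.1 hz2 with rfl | hz2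
          · omega
          · exact ⟨z, hz2, hxz⟩
      · exfalso
        have hbx : b < x := lt_of_lt_of_le hab hax
        have hb1 : b ∈ a :: t1 := (hiff b hbx).2 (List.mem_cons_self (a := b) (l := t2))
        rcases List.mem_cons.1 hb1 with rfl | hb1
        · omega
        · exact absurd (List.rel_of_pairwise_cons h1 (a' := b) hb1) (by omega)

theorem stmt19 (d k : ℕ) (Δ : Finset (Finset ℕ))
    (hC : IsComplex Δ) (hP : IsPure d Δ) (hU : UnitIntervalOrder d Δ)
    (L : List (Finset ℕ)) (hL : LexFacetList Δ L) (hk : k + 1 < L.length)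
    (v : ℕ → ℕ) (hmono : ∀ a b : ℕ, a < b → b ≤ d → v a < v b)
    (hF : L.get ⟨k + 1, hk⟩ = (Finset.range (d + 1)).image v)
    (i x : ℕ) (hi1 : 1 ≤ i) (hid : i ≤ d)
    (hgap1 : v (i - 1) < x) (hgap2 : x < v i)
    (hnolow : ∀ j < i, v j = v 0 + j) :
    ∀ S ⊆ (Finset.Icc i d).image v, S.card = d - i →
      IsFacet Δ (insert x ((Finset.range i).image v ∪ S)) ∧
      faceLexLt (insert x ((Finset.range i).image v ∪ S)) (L.get ⟨k + 1, hk⟩) := by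
  intro S hS hScard
  have hmono' : ∀ a b : ℕ, a ≤ b → b ≤ d → v a ≤ v b := by
    intro a b hab hbd
    rcases lt_or_eq_of_le hab with h | h
    · exact (hmono a b h hbd).le
    · exact h ▸ le_rfl
  set A := (Finset.range i).image v with hA
  set T := insert x (A ∪ S) with hT
  set F := L.get ⟨k + 1, hk⟩ with hFdef
  -- basic facts about members
  have hAmem : ∀ z ∈ A, ∃ a, a < i ∧ z = v a := by
    intro z hz
    simp only [hA, Finset.mem_image, Finset.mem_range] at hz
    obtain ⟨a, ha, rfl⟩ := hz
    exact ⟨a, ha, rfl⟩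
  have hSmem : ∀ z ∈ S, ∃ j, i ≤ j ∧ j ≤ d ∧ z = v j := by
    intro z hz
    have := hS hz
    simp only [Finset.mem_image, Finset.mem_Icc] at this
    obtain ⟨j, ⟨hj1, hj2⟩, rfl⟩ := this
    exact ⟨j, hj1, hj2, rfl⟩
  have hAlt : ∀ z ∈ A, z < x := by
    intro z hz
    obtain ⟨a, ha, rfl⟩ := hAmem z hz
    have : v a ≤ v (i - 1) := hmono' a (i - 1) (by omega) (by omega)
    omega
  have hSgt : ∀ z ∈ S, x < z := by
    intro z hz
    obtain ⟨j, hj1, _, rfl⟩ := hSmem z hz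
    have : v i ≤ v j := hmono' i j hj1 (by omega)
    omega
  have hxAS : x ∉ A ∪ S := by
    intro h
    rcases Finset.mem_union.1 h with h | h
    · exact absurd (hAlt x h) (lt_irrefl x)
    · exact absurd (hSgt x h) (lt_irrefl x)
  have hAcard : A.card = i := by
    rw [hA, Finset.card_image_of_injOn, Finset.card_range]
    intro a ha b hb hab
    simp only [Finset.coe_range, Set.mem_Iio] at ha hb
    by_contra hne
    rcases Nat.lt_or_ge a b with h | h
    · exact absurd hab (hmono a b h (by omega)).ne
    · have : b < a := by omega
      exact absurd hab.symm (hmono b a this (by omega)).ne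
  have hASdisj : Disjoint A S := by
    rw [Finset.disjoint_left]
    intro z hzA hzS
    exact absurd (lt_trans (hAlt z hzA) (hSgt z hzS)) (lt_irrefl z)
  have hTcard : T.card = d + 1 := by
    rw [hT, Finset.card_insert_of_notMem hxAS, Finset.card_union_of_disjoint hASdisj,
      hAcard, hScard]
    omega
  have hFfacet : IsFacet Δ F := by
    obtain ⟨_, hLF, _⟩ := hL
    have hmem : F ∈ L.toFinset := List.mem_toFinset.2 (L.get_mem _)
    rw [hLF] at hmem
    rw [facets, Finset.mem_filter] at hmem
    exact ⟨hmem.1, hmem.2⟩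
  have hv0F : v 0 ∈ F := by
    rw [hF]; exact Finset.mem_image.2 ⟨0, Finset.mem_range.2 (by omega), rfl⟩
  have hvdF : v d ∈ F := by
    rw [hF]; exact Finset.mem_image.2 ⟨d, Finset.mem_range.2 (by omega), rfl⟩
  have hviF : v i ∈ F := by
    rw [hF]; exact Finset.mem_image.2 ⟨i, Finset.mem_range.2 (by omega), rfl⟩
  have hne : F.Nonempty := ⟨v 0, hv0F⟩
  have hTrange : ∀ t ∈ T, v 0 ≤ t ∧ t ≤ v d := by
    intro t ht
    rcases Finset.mem_insert.1 ht with rfl | ht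
    · have h1 : v 0 ≤ v (i - 1) := hmono' 0 (i - 1) (by omega) (by omega)
      have h2 : v i ≤ v d := hmono' i d hid (le_refl d)
      omega
    · rcases Finset.mem_union.1 ht with ht | ht
      · obtain ⟨a, ha, rfl⟩ := hAmem t ht
        exact ⟨hmono' 0 a (by omega) (by omega), hmono' a d (by omega) (le_refl d)⟩
      · obtain ⟨j, hj1, hj2, rfl⟩ := hSmem t ht
        exact ⟨hmono' 0 j (by omega) hj2, hmono' j d hj2 (le_refl d)⟩
  have hTsub : T ⊆ Finset.Icc (F.min' hne) (F.max' hne) := by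
    intro t ht
    obtain ⟨h1, h2⟩ := hTrange t ht
    rw [Finset.mem_Icc]
    exact ⟨le_trans (Finset.min'_le F (v 0) hv0F) h1,
      le_trans h2 (Finset.le_max' F (v d) hvdF)⟩
  have hTfacet : IsFacet Δ T := hU F hFfacet hne T hTsub hTcard
  refine ⟨hTfacet, ?_⟩
  have hxF : x ∉ F := by
    rw [hF]
    simp only [Finset.mem_image, Finset.mem_range]
    rintro ⟨j, hj, hjx⟩
    rcases Nat.lt_or_ge j i with h | h
    · have : v j ≤ v (i - 1) := hmono' j (i - 1) (by omega) (by omega)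
      omega
    · have : v i ≤ v j := hmono' i j h (by omega)
      omega
  unfold faceLexLt sortedList
  apply lex_aux _ _ (Finset.sortedLT_sort T).pairwise (Finset.sortedLT_sort F).pairwise x
  · rw [Finset.mem_sort]
    exact Finset.mem_insert_self x _
  · rw [Finset.mem_sort]
    exact hxF
  · intro y hy
    rw [Finset.mem_sort, Finset.mem_sort]
    constructor
    · intro hyT
      rcases Finset.mem_insert.1 hyT with rfl | hyT
      · omega
      rcases Finset.mem_union.1 hyT with h | h
      · obtain ⟨a, ha, rfl⟩ := hAmem y h
        rw [hF]
        exact Finset.mem_image.2 ⟨a, Finset.mem_range.2 (by omega), rfl⟩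
      · exact absurd (hSgt y h) (by omega)
    · intro hyF
      rw [hF] at hyF
      obtain ⟨j, hj, rfl⟩ := Finset.mem_image.1 hyF
      rw [Finset.mem_range] at hj
      have hji : j < i := by
        by_contra h
        have : v i ≤ v j := hmono' i j (by omega) (by omega)
        omega
      exact Finset.mem_insert_of_mem (Finset.mem_union_left _
        (Finset.mem_image.2 ⟨j, Finset.mem_range.2 hji, rfl⟩))
  · exact ⟨v i, by rw [Finset.mem_sort]; exact hviF, hgap2⟩
end
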